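/- arXiv:1108.0845 — 2 statements merged into one kernel-verified Lean document; each statement's English description precedes it below -/
import Mathlib

section
/- With the extension setup below, if the metric subspace (T′, d|_{T′×T′}) satisfies (MC′) and the right K-vector space V is finite-dimensional, then the metric space (S, d) satisfies (MC′). -/
/-- `2 ^ (-a)` for `a ∈ ℝ ∪ {∞}`, with the convention `2 ^ (-∞) = 0`. -/
noncomputable def toDist (a : WithTop ℝ) : ℝ :=
  WithTop.recTopCoe 0 (fun r : ℝ => (2 : ℝ) ^ (-r)) a

/-- Property (MC′) for a distance function `d` on `X`: every nested sequence of c-balls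
(closed balls of positive radius) has nonempty intersection. -/
def MCprime {X : Type*} (d : X → X → ℝ) : Prop :=
  ∀ (c : ℕ → X) (r : ℕ → ℝ),
    (∀ n, 0 < r n) →
    (∀ n, {y | d (c (n + 1)) y ≤ r (n + 1)} ⊆ {y | d (c n) y ≤ r n}) →
    (⋂ n, {y | d (c n) y ≤ r n}).Nonempty

/-- Property (MC′) for the metric subspace on `A ⊆ X` induced by `d`. -/
def MCprimeOn {X : Type*} (d : X → X → ℝ) (A : Set X) : Prop :=
  ∀ (c : ℕ → X) (r : ℕ → ℝ),
    (∀ n, c n ∈ A) → (∀ n, 0 < r n) →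
    (∀ n, {y ∈ A | d (c (n + 1)) y ≤ r (n + 1)} ⊆ {y ∈ A | d (c n) y ≤ r n}) →
    (⋂ n, {y ∈ A | d (c n) y ≤ r n}).Nonempty


universe u v w
set_option linter.unusedSectionVars false





lemma toDist_le_rpow {a : WithTop ℝ} {ρ : ℝ} : toDist a ≤ (2:ℝ)^(-ρ) ↔ (ρ : WithTop ℝ) ≤ a := by
  cases a with
  | top => simp [toDist]; positivity
  | coe r =>
      simp only [toDist, WithTop.recTopCoe_coe, WithTop.coe_le_coe,
        Real.rpow_le_rpow_left_iff one_lt_two, neg_le_neg_iff]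

lemma toDist_anti {a b : WithTop ℝ} (h : a ≤ b) : toDist b ≤ toDist a := by
  cases a with
  | top =>
      rw [top_le_iff.1 h]
  | coe v =>
      cases b with
      | top =>
          show (0:ℝ) ≤ (2:ℝ)^(-v)
          positivity
      | coe w =>
          show (2:ℝ)^(-w) ≤ (2:ℝ)^(-v)
          apply Real.rpow_le_rpow_of_exponent_le (by norm_num)
          simp only [neg_le_neg_iff]
          exact_mod_cast h

lemma coe_div_le_iff {m μ ρ : ℝ} (hm : 0 < m) (a : WithTop ℝ) :
    (((ρ - μ)/m : ℝ) : WithTop ℝ) ≤ a ↔ (ρ : WithTop ℝ) ≤ (μ : WithTop ℝ) + (m : WithTop ℝ) * a := by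
  cases a with
  | top =>
      have hm' : ((m:ℝ) : WithTop ℝ) ≠ 0 := by exact_mod_cast hm.ne'
      simp [WithTop.mul_top hm']
  | coe v =>
      rw [← WithTop.coe_mul, ← WithTop.coe_add, WithTop.coe_le_coe, WithTop.coe_le_coe,
        div_le_iff₀ hm]
      constructor <;> intro h <;> nlinarith

lemma rpow_neg_neg_logb {r : ℝ} (hr : 0 < r) : (2:ℝ)^(-(-Real.logb 2 r)) = r := by
  rw [neg_neg]; exact Real.rpow_logb two_pos (by norm_num) hr

lemma tri {S : Type*} [AddGroup S] (a c b : S) : a + -b = (a + -c) + (c + -b) := by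
  rw [add_assoc, neg_add_cancel_left]

lemma negdiff {S : Type*} [AddGroup S] (a b : S) : -(a + -b) = b + -a := by
  rw [neg_add_rev, neg_neg]

section Core
variable {K S : Type*} [DivisionRing K] [AddGroup S]
  (πK : S →+ K)
  (ω : S → WithTop ℝ)
  (hω3neg : ∀ x : S, ω (-x) = ω x)
  (hω3 : ∀ x y : S, min (ω x) (ω y) ≤ ω (x + y))

section liftsec
variable
  (hMC : MCprimeOn (fun x y : S => toDist (ω (x + -y))) {x : S | πK x = 0})

include hω3neg hω3 hMC in
/-- Key lifting lemma: a "Cauchy-like" sequence in a fiber of `πK` with rates `β`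
has a pseudo-limit in the same fiber. -/
lemma lift_lemma (x : ℕ → S) (k0 : K) (hx : ∀ n, πK (x n) = k0)
    (β : ℕ → ℝ) (hβ : Monotone β)
    (hstep : ∀ n, (β n : WithTop ℝ) ≤ ω (x n + -(x (n+1)))) :
    ∃ y, πK y = k0 ∧ ∀ n, (β n : WithTop ℝ) ≤ ω (x n + -y) := by
  set t : ℕ → S := fun n => x n + -(x 0) with ht
  have htker : ∀ n, πK (t n) = 0 := by
    intro n; simp [ht, hx n, hx 0]
  have htdiff : ∀ n, t n + -(t (n+1)) = x n + -(x (n+1)) := by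
    intro n
    show (x n + -(x 0)) + -(x (n+1) + -(x 0)) = _
    rw [negdiff, ← tri]
  obtain ⟨u, hu⟩ := hMC t (fun n => (2:ℝ)^(-(β n))) htker
    (fun n => Real.rpow_pos_of_pos two_pos _)
    (by
      intro n y hy
      obtain ⟨hyA, hyd⟩ := hy
      refine ⟨hyA, ?_⟩
      simp only at hyd ⊢
      rw [toDist_le_rpow] at hyd ⊢
      rw [tri (t n) (t (n+1)) y]
      refine le_trans ?_ (le_trans (hω3 _ _) (le_refl _))
      refine le_min ?_ ?_
      · rw [htdiff]; exact hstep n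
      · exact le_trans (WithTop.coe_le_coe.2 (hβ (Nat.le_succ n))) hyd)
  simp only [Set.mem_iInter, Set.mem_setOf_eq] at hu
  refine ⟨u + x 0, by simp [(hu 0).1, hx 0], ?_⟩
  intro n
  have h1 : x n + -(u + x 0) = t n + -u := by
    show _ = (x n + -(x 0)) + -u
    rw [neg_add_rev, add_assoc]
  rw [h1]
  have := (hu n).2
  rwa [toDist_le_rpow] at this

include hω3neg hω3 hMC in
/-- The fiber of `πK` over `1` has an element of maximal `ω`. -/
lemma best_rep (hπK : Function.Surjective πK) (hω1 : ∀ x : S, ω x = ⊤ ↔ x = 0) :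
    ∃ e, πK e = 1 ∧ ∀ x, πK x = 1 → ω x ≤ ω e := by
  classical
  have fiber_ne_top : ∀ x : S, πK x = 1 → ω x ≠ ⊤ := by
    intro x hx htop
    rw [hω1] at htop
    rw [htop, map_zero] at hx
    exact one_ne_zero hx.symm
  have key : ∀ (x : ℕ → S) (β : ℕ → ℝ), (∀ n, πK (x n) = 1) → Monotone β →
      (∀ n, (β n : WithTop ℝ) ≤ ω (x n)) →
      ∃ e, πK e = 1 ∧ (∀ n, (β n : WithTop ℝ) ≤ ω e) := by
    intro x β hx1 hβ hβx
    obtain ⟨e, he1, he2⟩ := lift_lemma πK ω hω3neg hω3 hMC x 1 hx1 β hβ (by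
      intro n
      have h := hω3 (x n) (-(x (n+1)))
      rw [hω3neg] at h
      exact le_trans (le_min (hβx n)
        (le_trans (WithTop.coe_le_coe.2 (hβ (Nat.le_succ n))) (hβx (n+1)))) h)
    refine ⟨e, he1, fun n => ?_⟩
    have : ω e = ω ((e + -(x n)) + x n) := by rw [neg_add_cancel_right]
    rw [this]
    refine le_trans (le_min ?_ (hβx n)) (hω3 _ _)
    rw [← negdiff, hω3neg]
    exact he2 n
  by_cases hbdd : ∃ B : ℝ, ∀ x : S, πK x = 1 → ω x ≤ (B : WithTop ℝ)
  · obtain ⟨B, hB⟩ := hbdd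
    set Rset : Set ℝ := {v | ∃ x, πK x = 1 ∧ ω x = (v : WithTop ℝ)} with hRset
    obtain ⟨x0, hx0⟩ := hπK 1
    obtain ⟨v0, hv0⟩ : ∃ v0 : ℝ, ω x0 = (v0 : WithTop ℝ) := by
      cases h : ω x0 with
      | top => exact absurd h (fiber_ne_top x0 hx0)
      | coe v => exact ⟨v, rfl⟩
    have hne : Rset.Nonempty := ⟨v0, x0, hx0, hv0⟩
    have hbdd' : BddAbove Rset := by
      refine ⟨B, fun v hv => ?_⟩
      obtain ⟨x, hx, he⟩ := hv
      exact_mod_cast he ▸ hB x hx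
    set s := sSup Rset with hs
    have hstep : ∀ n : ℕ, ∃ x : S, πK x = 1 ∧ ((s - 1/(n+1) : ℝ) : WithTop ℝ) < ω x := by
      intro n
      have h1 : s - 1/(n+1) < s := by
        have : (0:ℝ) < 1/(n+1) := by positivity
        linarith
      obtain ⟨v, hv, hlt⟩ := exists_lt_of_lt_csSup hne h1
      obtain ⟨x, hx, he⟩ := hv
      exact ⟨x, hx, by rw [he]; exact_mod_cast hlt⟩
    choose x hx1 hx2 using hstep
    have hβmono : Monotone (fun n : ℕ => s - 1/(n+1)) := by
      intro a b hab
      have h1 : (1:ℝ)/(b+1) ≤ 1/(a+1) := by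
        apply one_div_le_one_div_of_le
        · positivity
        · have := (Nat.cast_le (α := ℝ)).2 hab; linarith
      simp only
      linarith
    obtain ⟨e, he1, he2⟩ := key x (fun n => s - 1/(n+1)) hx1 hβmono
      (fun n => le_of_lt (hx2 n))
    obtain ⟨ve, hve⟩ : ∃ ve : ℝ, ω e = (ve : WithTop ℝ) := by
      cases h : ω e with
      | top => exact absurd h (fiber_ne_top e he1)
      | coe v => exact ⟨v, rfl⟩
    have hves : s ≤ ve := by
      by_contra hlt
      push_neg at hlt
      obtain ⟨n, hn⟩ := exists_nat_one_div_lt (by linarith : (0:ℝ) < s - ve)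
      have := he2 n
      rw [hve, WithTop.coe_le_coe] at this
      linarith
    refine ⟨e, he1, fun y hy => ?_⟩
    obtain ⟨u, hu⟩ : ∃ u : ℝ, ω y = (u : WithTop ℝ) := by
      cases h : ω y with
      | top => exact absurd h (fiber_ne_top y hy)
      | coe v => exact ⟨v, rfl⟩
    rw [hu, hve, WithTop.coe_le_coe]
    exact le_trans (le_csSup hbdd' ⟨y, hy, hu⟩) hves
  · exfalso
    push_neg at hbdd
    have hstep : ∀ n : ℕ, ∃ x : S, πK x = 1 ∧ ((n : ℝ) : WithTop ℝ) < ω x := by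
      intro n
      obtain ⟨x, hx, hlt⟩ := hbdd n
      exact ⟨x, hx, hlt⟩
    choose x hx1 hx2 using hstep
    obtain ⟨e, he1, he2⟩ := key x (fun n => (n : ℝ)) hx1
      (fun a b hab => by simp only; exact_mod_cast hab) (fun n => le_of_lt (hx2 n))
    obtain ⟨ve, hve⟩ : ∃ ve : ℝ, ω e = (ve : WithTop ℝ) := by
      cases h : ω e with
      | top => exact absurd h (fiber_ne_top e he1)
      | coe v => exact ⟨v, rfl⟩
    obtain ⟨n, hn⟩ := exists_nat_gt ve
    have := he2 n
    rw [hve, WithTop.coe_le_coe] at this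
    linarith

include hω3neg hω3 hMC in
/-- The one-dimensional extension theorem. -/
theorem core_onedim (hπK : Function.Surjective πK)
    (ν : K → WithTop ℝ) (hν0 : ν 0 = ⊤)
    (hνsph : MCprime (fun x y : K => toDist (ν (x - y))))
    (smul : S → K → S)
    (hs1 : ∀ (x : S) (l : K), πK (smul x l) = πK x * l)
    (hs3 : ∀ (x : S) (k l : K), smul (smul x k) l = smul x (k * l))
    (hs4 : ∀ x : S, smul x 1 = x)
    (m : ℝ) (hm : 0 < m)
    (hω1 : ∀ x : S, ω x = ⊤ ↔ x = 0)
    (hω2 : ∀ (x : S) (l : K), ω (smul x l) = ω x + (m : WithTop ℝ) * ν l) :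
    MCprime (fun x y : S => toDist (ω (x + -y))) := by
  classical
  have hω0 : ω (0 : S) = ⊤ := (hω1 0).2 rfl
  have dsymm : ∀ a b : S, ω (a + -b) = ω (b + -a) := by
    intro a b
    rw [← negdiff, hω3neg]
  -- the maximal representative of the fiber over 1
  obtain ⟨e, he1, hemax⟩ := best_rep πK ω hω3neg hω3 hMC hπK hω1
  obtain ⟨μ, hμ⟩ : ∃ μ : ℝ, ω e = (μ : WithTop ℝ) := by
    cases h : ω e with
    | top =>
        exfalso
        rw [hω1] at h
        rw [h, map_zero] at he1
        exact one_ne_zero he1.symm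
    | coe v => exact ⟨v, rfl⟩
  -- upper bound on ω over each fiber
  have upper : ∀ x : S, ω x ≤ (μ : WithTop ℝ) + (m : WithTop ℝ) * ν (πK x) := by
    intro x
    by_cases hk : πK x = 0
    · have hm' : ((m:ℝ) : WithTop ℝ) ≠ 0 := by exact_mod_cast hm.ne'
      rw [hk, hν0, WithTop.mul_top hm', add_top]
      exact le_top
    · have hy : πK (smul x (πK x)⁻¹) = 1 := by
        rw [hs1, mul_inv_cancel₀ hk]
      have hxy : smul (smul x (πK x)⁻¹) (πK x) = x := by
        rw [hs3, inv_mul_cancel₀ hk, hs4]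
      calc ω x = ω (smul x (πK x)⁻¹) + (m : WithTop ℝ) * ν (πK x) := by
            rw [← hω2, hxy]
        _ ≤ (μ : WithTop ℝ) + (m : WithTop ℝ) * ν (πK x) := by
            exact add_le_add_left (le_trans (hemax _ hy) (le_of_eq hμ)) _
  -- lifting points of K into balls of S
  have lower : ∀ (x : S) (k : K) (ρ : ℝ),
      (ρ : WithTop ℝ) ≤ (μ : WithTop ℝ) + (m : WithTop ℝ) * ν (πK x - k) →
      ∃ y, πK y = k ∧ (ρ : WithTop ℝ) ≤ ω (x + -y) := by
    intro x k ρ hρ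
    by_cases h0 : πK x - k = 0
    · refine ⟨x, by rw [← sub_eq_zero.1 h0], ?_⟩
      rw [add_neg_cancel, hω0]
      exact le_top
    · refine ⟨-(smul e (πK x - k)) + x, ?_, ?_⟩
      · rw [map_add, map_neg, hs1, he1, one_mul, neg_sub, sub_add_cancel]
      · have h1 : x + -(-(smul e (πK x - k)) + x) = smul e (πK x - k) := by
          rw [neg_add_rev, neg_neg, add_neg_cancel_left]
        rw [h1, hω2, hμ]
        exact hρ
  -- main argument
  intro c r hr hnest
  -- monotone radii giving the same balls
  set r' : ℕ → ℝ := fun n => Nat.rec (r 0) (fun n acc => min acc (r (n+1))) n with hr'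
  have hr'succ : ∀ n, r' (n+1) = min (r' n) (r (n+1)) := fun n => rfl
  have hr'pos : ∀ n, 0 < r' n := by
    intro n
    induction n with
    | zero => exact hr 0
    | succ n ih => rw [hr'succ]; exact lt_min ih (hr (n+1))
  have hr'anti : Antitone r' :=
    antitone_nat_of_succ_le (fun n => by rw [hr'succ]; exact min_le_left _ _)
  set B : ℕ → Set S := fun n => {y | toDist (ω (c n + -y)) ≤ r n} with hB
  have hnest' : ∀ n, B (n+1) ⊆ B n := hnest
  have hself : ∀ n, c n ∈ B n := by
    intro n
    show toDist (ω (c n + -(c n))) ≤ r n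
    rw [add_neg_cancel, hω0]
    show (0:ℝ) ≤ r n
    exact le_of_lt (hr n)
  have hBr' : ∀ n, B n = {y | toDist (ω (c n + -y)) ≤ r' n} := by
    intro n
    induction n with
    | zero => rfl
    | succ n ih =>
        apply Set.Subset.antisymm
        · intro y hy
          have hy1 : toDist (ω (c (n+1) + -y)) ≤ r (n+1) := hy
          have hy2 : toDist (ω (c n + -y)) ≤ r' n := by
            have := hnest' n hy
            rwa [ih] at this
          have hc2 : toDist (ω (c n + -(c (n+1)))) ≤ r' n := by
            have := hnest' n (hself (n+1))
            rwa [ih] at this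
          show toDist (ω (c (n+1) + -y)) ≤ r' (n+1)
          rw [hr'succ]
          refine le_min ?_ hy1
          have h3 : min (ω (c (n+1) + -(c n))) (ω (c n + -y)) ≤ ω (c (n+1) + -y) := by
            rw [tri (c (n+1)) (c n) y]
            exact hω3 _ _
          rcases min_le_iff.1 (le_refl (min (ω (c (n+1) + -(c n))) (ω (c n + -y)))) with h | h
          all_goals {
            refine le_trans (toDist_anti h3) ?_
            rcases min_cases (ω (c (n+1) + -(c n))) (ω (c n + -y)) with ⟨heq, _⟩ | ⟨heq, _⟩
            · rw [heq, dsymm]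
              exact hc2
            · rw [heq]
              exact hy2 }
        · intro y hy
          have : toDist (ω (c (n+1) + -y)) ≤ r' (n+1) := hy
          show toDist (ω (c (n+1) + -y)) ≤ r (n+1)
          exact le_trans this (by rw [hr'succ]; exact min_le_right _ _)
  set ρ : ℕ → ℝ := fun n => -Real.logb 2 (r' n) with hρ
  have hmem : ∀ n (y : S), y ∈ B n ↔ (ρ n : WithTop ℝ) ≤ ω (c n + -y) := by
    intro n y
    rw [hBr' n]
    show toDist (ω (c n + -y)) ≤ r' n ↔ _
    rw [← rpow_neg_neg_logb (hr'pos n), toDist_le_rpow]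
  have hρmono : Monotone ρ := by
    intro a b hab
    simp only [hρ, neg_le_neg_iff]
    exact Real.logb_le_logb_of_le (by norm_num) (hr'pos b) (hr'anti hab)
  -- the projected balls in K
  set R : ℕ → ℝ := fun n => (2:ℝ)^(-((ρ n - μ)/m)) with hR
  obtain ⟨k0, hk0⟩ := hνsph (fun n => πK (c n)) R
    (fun n => Real.rpow_pos_of_pos two_pos _)
    (by
      intro n k hk
      have hk' : ((ρ (n+1) : ℝ) : WithTop ℝ) ≤
          (μ : WithTop ℝ) + (m : WithTop ℝ) * ν (πK (c (n+1)) - k) := by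
        rw [← coe_div_le_iff hm]
        rw [Set.mem_setOf_eq] at hk
        exact toDist_le_rpow.1 hk
      obtain ⟨y, hy1, hy2⟩ := lower (c (n+1)) k _ hk'
      have hyB : y ∈ B n := hnest' n ((hmem (n+1) y).2 hy2)
      have h5 : (ρ n : WithTop ℝ) ≤ ω (c n + -y) := (hmem n y).1 hyB
      have h6 : πK (c n + -y) = πK (c n) - k := by
        rw [map_add, map_neg, hy1, sub_eq_add_neg]
      show toDist (ν (πK (c n) - k)) ≤ R n
      rw [toDist_le_rpow, coe_div_le_iff hm, ← h6]
      exact le_trans h5 (upper _))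
  simp only [Set.mem_iInter, Set.mem_setOf_eq] at hk0
  -- lift the common point of the projected balls
  have hyex : ∀ n, ∃ y, πK y = k0 ∧ (ρ n : WithTop ℝ) ≤ ω (c n + -y) := by
    intro n
    refine lower (c n) k0 (ρ n) ?_
    rw [← coe_div_le_iff hm]
    exact toDist_le_rpow.1 (hk0 n)
  choose y hy1 hy2 using hyex
  have hy2' : ∀ n, (ρ n : WithTop ℝ) ≤ ω (c n + -(y (n+1))) := by
    intro n
    exact (hmem n _).1 (hnest' n ((hmem (n+1) _).2 (hy2 (n+1))))
  have hstep : ∀ n, (ρ n : WithTop ℝ) ≤ ω (y n + -(y (n+1))) := by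
    intro n
    rw [tri (y n) (c n) (y (n+1))]
    refine le_trans (le_min ?_ (hy2' n)) (hω3 _ _)
    rw [dsymm]
    exact hy2 n
  obtain ⟨ystar, hystar1, hystar2⟩ := lift_lemma πK ω hω3neg hω3 hMC y k0 hy1 ρ hρmono hstep
  refine ⟨ystar, Set.mem_iInter.2 fun n => ?_⟩
  show toDist (ω (c n + -ystar)) ≤ r n
  have : (ρ n : WithTop ℝ) ≤ ω (c n + -ystar) := by
    rw [tri (c n) (y n) ystar]
    exact le_trans (le_min (hy2 n) (hystar2 n)) (hω3 _ _)
  exact (hmem n ystar).2 this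
end liftsec
end Core

section Ind
variable {K : Type u} [DivisionRing K]

theorem auxB
    (ν : K → WithTop ℝ)
    (hν1 : ∀ x : K, ν x = ⊤ ↔ x = 0)
    (hνsph : MCprime (fun x y : K => toDist (ν (x - y))))
    (n : ℕ) :
    ∀ {S : Type v} {V : Type w} [AddGroup S] [AddCommGroup V] [Module Kᵐᵒᵖ V]
      [FiniteDimensional Kᵐᵒᵖ V],
      Module.finrank Kᵐᵒᵖ V = n →
      ∀ (π : S →+ V), Function.Surjective π →
      ∀ (smul : S → K → S),
      (∀ (x : S) (l : K), π (smul x l) = MulOpposite.op l • π x) →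
      (∀ (x y : S) (l : K), smul (x + y) l = smul x l + smul y l) →
      (∀ (x : S) (k l : K), smul (smul x k) l = smul x (k * l)) →
      (∀ x : S, smul x 1 = x) →
      ∀ (m : ℝ), 0 < m →
      ∀ (ω : S → WithTop ℝ),
      (∀ x : S, ω x = ⊤ ↔ x = 0) →
      (∀ (x : S) (l : K), ω (smul x l) = ω x + (m : WithTop ℝ) * ν l) →
      (∀ x : S, ω (-x) = ω x) →
      (∀ x y : S, min (ω x) (ω y) ≤ ω (x + y)) →
      MCprimeOn (fun x y : S => toDist (ω (x + -y))) {x : S | π x = 0} →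
      MCprime (fun x y : S => toDist (ω (x + -y))) := by
  induction n with
  | zero =>
      intro S V _ _ _ _ hn π hπ smul hs1 hs2 hs3 hs4 m hm ω hω1 hω2 hω3neg hω3 hMC
      haveI : Subsingleton V := Module.finrank_zero_iff.1 hn
      have hA : ∀ x : S, π x = 0 := fun x => Subsingleton.elim _ _
      intro c r hr hnest
      obtain ⟨y, hy⟩ := hMC c r (fun k => hA (c k)) hr (by
        intro k z hz
        exact ⟨hA z, hnest k hz.2⟩)
      simp only [Set.mem_iInter, Set.mem_sep_iff] at hy
      exact ⟨y, Set.mem_iInter.2 fun k => (hy k).2⟩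
  | succ n ih =>
      intro S V _ _ _ _ hn π hπ smul hs1 hs2 hs3 hs4 m hm ω hω1 hω2 hω3neg hω3 hMC
      classical
      have hpos : 0 < Module.finrank Kᵐᵒᵖ V := by omega
      set b := Module.finBasis Kᵐᵒᵖ V with hb
      set i0 : Fin (Module.finrank Kᵐᵒᵖ V) := ⟨0, hpos⟩ with hi0
      set f : V →ₗ[Kᵐᵒᵖ] Kᵐᵒᵖ := b.coord i0 with hf
      have hfsurj : Function.Surjective f := by
        intro k
        refine ⟨k • b i0, ?_⟩
        simp [hf, Module.Basis.coord_apply]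
      set πK : S →+ K := AddMonoidHom.mk' (fun x => (f (π x)).unop)
        (by intro a b; simp [map_add]) with hπKdef
      have hπKapp : ∀ x : S, πK x = (f (π x)).unop := fun _ => rfl
      have hπKs : ∀ (x : S) (l : K), πK (smul x l) = πK x * l := by
        intro x l
        rw [hπKapp, hπKapp, hs1, map_smul]
        show (MulOpposite.op l * f (π x)).unop = _
        rw [MulOpposite.unop_mul, MulOpposite.unop_op]
      have hπKsurj : Function.Surjective πK := by
        intro k
        obtain ⟨v, hv⟩ := hfsurj (MulOpposite.op k)
        obtain ⟨x, hx⟩ := hπ v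
        exact ⟨x, by rw [hπKapp, hx, hv, MulOpposite.unop_op]⟩
      have hkerK : ∀ x : S, π x = 0 → πK x = 0 := by
        intro x hx
        rw [hπKapp, hx, map_zero, MulOpposite.unop_zero]
      -- the subgroup and the subspace
      have hmemker : ∀ x : S, x ∈ πK.ker ↔ πK x = 0 := fun x => AddMonoidHom.mem_ker
      have hfker : ∀ x : S, πK x = 0 ↔ f (π x) = 0 := by
        intro x
        rw [hπKapp, MulOpposite.unop_eq_zero_iff]
      set S' := ↥(πK.ker) with hS'
      have hn' : Module.finrank Kᵐᵒᵖ ↥(LinearMap.ker f) = n := by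
        have h1 := LinearMap.finrank_range_add_finrank_ker f
        rw [LinearMap.range_eq_top.2 hfsurj, finrank_top, Module.finrank_self] at h1
        omega
      set π' : S' →+ ↥(LinearMap.ker f) := AddMonoidHom.mk'
        (fun x => ⟨π x.1, by
          rw [LinearMap.mem_ker, ← hfker]
          exact (hmemker _).1 x.2⟩)
        (by
          intro a b
          ext
          show π ((a + b : S') : S) = π (a : S) + π (b : S)
          rw [AddSubgroup.coe_add, map_add]) with hπ'def
      have hπ'app : ∀ x : S', (π' x : V) = π x.1 := fun _ => rfl
      have hπ'surj : Function.Surjective π' := by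
        intro v
        obtain ⟨x, hx⟩ := hπ v.1
        have hxk : x ∈ πK.ker := by
          rw [hmemker, hfker, hx]
          exact v.2
        exact ⟨⟨x, hxk⟩, Subtype.ext hx⟩
      set smul' : S' → K → S' := fun x l => ⟨smul x.1 l, by
        rw [hmemker, hπKs, (hmemker _).1 x.2, zero_mul]⟩ with hsmul'def
      have hω3' : ∀ x y : S', min (ω x.1) (ω y.1) ≤ ω ((x + y).1) := fun x y => hω3 x.1 y.1
      -- apply the induction hypothesis to S', V'
      have hsub := ih hn' π' hπ'surj smul'
        (fun x l => Subtype.ext (by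
          rw [hπ'app]
          show π (smul x.1 l) = _
          rw [hs1]
          rfl))
        (fun x y l => Subtype.ext (hs2 x.1 y.1 l))
        (fun x k l => Subtype.ext (hs3 x.1 k l))
        (fun x => Subtype.ext (hs4 x.1))
        m hm (fun x => ω x.1)
        (fun x => by
          rw [hω1]
          exact ⟨fun h => Subtype.ext h, fun h => by rw [h]; rfl⟩)
        (fun x l => hω2 x.1 l)
        (fun x => hω3neg x.1)
        (fun x y => hω3 x.1 y.1)
        (by
          -- MCprimeOn for the kernel of π' inside S'
          intro c r hcA hr hnest
          have hres := hMC (fun k => (c k).1) r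
            (fun k => by
              have := hcA k
              simp only [Set.mem_setOf_eq] at this ⊢
              exact congrArg Subtype.val this)
            hr
            (by
              intro k y hy
              obtain ⟨hy1, hy2⟩ := hy
              have hy1' : π y = 0 := hy1
              have hyk : y ∈ πK.ker := (hmemker y).2 (hkerK y hy1')
              have hmem2 : (⟨y, hyk⟩ : S') ∈
                  {z ∈ {x : S' | π' x = 0} | toDist (ω ((c (k+1) + -z).1)) ≤ r (k+1)} := by
                refine ⟨Subtype.ext hy1', ?_⟩
                exact hy2
              have := hnest k hmem2
              exact ⟨congrArg Subtype.val this.1, this.2⟩)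
          obtain ⟨y, hy⟩ := hres
          simp only [Set.mem_iInter, Set.mem_sep_iff, Set.mem_setOf_eq] at hy
          have hyk : y ∈ πK.ker := (hmemker y).2 (hkerK y (hy 0).1)
          refine ⟨⟨y, hyk⟩, Set.mem_iInter.2 fun k => ⟨Subtype.ext (hy k).1, (hy k).2⟩⟩)
      -- convert to MCprimeOn for the kernel of πK inside S
      have hMCK : MCprimeOn (fun x y : S => toDist (ω (x + -y))) {x : S | πK x = 0} := by
        intro c r hcA hr hnest
        set c' : ℕ → S' := fun k => ⟨c k, (hmemker _).2 (hcA k)⟩ with hc'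
        obtain ⟨y, hy⟩ := hsub c' r hr (by
          intro k z hz
          have hz1 : z.1 ∈ {y ∈ {x : S | πK x = 0} |
              toDist (ω (c (k+1) + -y)) ≤ r (k+1)} := ⟨(hmemker _).1 z.2, hz⟩
          exact (hnest k hz1).2)
        simp only [Set.mem_iInter, Set.mem_setOf_eq] at hy
        refine ⟨y.1, Set.mem_iInter.2 fun k => ⟨(hmemker _).1 y.2, hy k⟩⟩
      exact core_onedim πK ω hω3neg hω3 hMCK hπKsurj ν ((hν1 0).2 rfl) hνsph smul
        hπKs hs3 hs4 m hm hω1 hω2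
end Ind

/-- In the extension setup (a skew field `K` with a spherically complete
valuation `ν`, a not-necessarily-commutative additive group `S`, a right `K`-vector space `V`,
a surjective group homomorphism `π : S → V` with kernel `T′ = {x | π x = 0}`, a lifted scalar
action and a valuation-like map `ω`), if the metric subspace `(T′, d|_{T′×T′})` satisfies
(MC′) and `V` is finite-dimensional, then `(S, d)` satisfies (MC′). -/
theorem extension_MCprime {K S V : Type*} [DivisionRing K] [AddGroup S]
    [AddCommGroup V] [Module Kᵐᵒᵖ V] [FiniteDimensional Kᵐᵒᵖ V]
    (ν : K → WithTop ℝ)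
    (hν1 : ∀ x : K, ν x = ⊤ ↔ x = 0)
    (hνmul : ∀ x y : K, ν (x * y) = ν x + ν y)
    (hνadd : ∀ x y : K, min (ν x) (ν y) ≤ ν (x + y))
    (hνsph : MCprime (fun x y : K => toDist (ν (x - y))))
    (π : S →+ V) (hπ : Function.Surjective π)
    (smul : S → K → S)
    (hs1 : ∀ (x : S) (l : K), π (smul x l) = MulOpposite.op l • π x)
    (hs2 : ∀ (x y : S) (l : K), smul (x + y) l = smul x l + smul y l)
    (hs3 : ∀ (x : S) (k l : K), smul (smul x k) l = smul x (k * l))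
    (hs4 : ∀ x : S, smul x 1 = x)
    (m : ℝ) (hm : 0 < m)
    (ω : S → WithTop ℝ)
    (hω1 : ∀ x : S, ω x = ⊤ ↔ x = 0)
    (hω2 : ∀ (x : S) (l : K), ω (smul x l) = ω x + (m : WithTop ℝ) * ν l)
    (hω3neg : ∀ x : S, ω (-x) = ω x)
    (hω3 : ∀ x y : S, min (ω x) (ω y) ≤ ω (x + y))
    (hMC : MCprimeOn (fun x y : S => toDist (ω (x + -y))) {x : S | π x = 0}) :
    MCprime (fun x y : S => toDist (ω (x + -y))) := by
  exact auxB ν hν1 hνsph (Module.finrank Kᵐᵒᵖ V) rfl π hπ smul hs1 hs2 hs3 hs4 m hm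
    ω hω1 hω2 hω3neg hω3 hMC
end

section
/- Let K be a field with a valuation ν, V a K-vector space, m > 0, and ω : V → ℝ ∪ {∞} a map satisfying (1) ω(x) = ∞ iff x = 0, (2) ω(x·l) = ω(x) + m·ν(l), and (3) ω(−x) = ω(x) and ω(x + y) ≥ min(ω(x), ω(y)); let d(x,y) := 2^{−ω(x−y)}. Suppose the subspaces U and W of V are ω-complements. Then (V, d) satisfies (MC′) if and only if both (U, d|_U) and (W, d|_W) satisfy (MC′). -/
lemma toDist_top : toDist (⊤ : WithTop ℝ) = 0 := rfl

lemma toDist_nonneg (a : WithTop ℝ) : 0 ≤ toDist a := by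
  induction a using WithTop.recTopCoe with
  | top => exact le_of_eq rfl
  | coe r => exact (Real.rpow_pos_of_pos two_pos _).le

lemma toDist_antitone : Antitone toDist := by
  intro a b hab
  induction b using WithTop.recTopCoe with
  | top => rw [toDist_top]; exact toDist_nonneg a
  | coe s =>
    induction a using WithTop.recTopCoe with
    | top => exact absurd hab (by simp)
    | coe r =>
      have h : r ≤ s := WithTop.coe_le_coe.mp hab
      exact (Real.rpow_le_rpow_left_iff one_lt_two).mpr (neg_le_neg h)

lemma toDist_min (a b : WithTop ℝ) : toDist (min a b) = max (toDist a) (toDist b) := by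
  rcases le_total a b with h | h
  · rw [min_eq_left h, max_eq_left (toDist_antitone h)]
  · rw [min_eq_right h, max_eq_right (toDist_antitone h)]

section Aux

variable {K V : Type*} [Field K] [AddCommGroup V] [Module K V]
variable (ω : V → WithTop ℝ)

lemma dist_symm (hω3neg : ∀ x : V, ω (-x) = ω x) (x y : V) :
    toDist (ω (x - y)) = toDist (ω (y - x)) := by
  rw [show y - x = -(x - y) by abel, hω3neg]

lemma dist_tri (hω3 : ∀ x y : V, min (ω x) (ω y) ≤ ω (x + y)) (x y z : V) :
    toDist (ω (x - y)) ≤ max (toDist (ω (x - z))) (toDist (ω (z - y))) := by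
  have h : min (ω (x - z)) (ω (z - y)) ≤ ω (x - y) := by
    have := hω3 (x - z) (z - y)
    rwa [sub_add_sub_cancel] at this
  calc toDist (ω (x - y)) ≤ toDist (min (ω (x - z)) (ω (z - y))) := toDist_antitone h
    _ = _ := toDist_min _ _

lemma forward_aux (hω0 : ω 0 = ⊤)
    (hω3neg : ∀ x : V, ω (-x) = ω x)
    (hω3 : ∀ x y : V, min (ω x) (ω y) ≤ ω (x + y))
    (A B : Submodule K V)
    (hAB : ∀ x ∈ A, ∀ y ∈ B, ω (x + y) = min (ω x) (ω y))
    (hsup : A ⊔ B = ⊤)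
    (h : MCprime (fun x y : V => toDist (ω (x - y)))) :
    MCprimeOn (fun x y : V => toDist (ω (x - y))) (A : Set V) := by
  intro c r hc hr hnest
  have hself : ∀ n, c n ∈ {y ∈ (A : Set V) | toDist (ω (c n - y)) ≤ r n} := by
    intro n
    refine ⟨hc n, ?_⟩
    simp only [sub_self, hω0, toDist_top]
    exact (hr n).le
  have chain : ∀ k n, k ≤ n →
      {y ∈ (A : Set V) | toDist (ω (c n - y)) ≤ r n} ⊆
      {y ∈ (A : Set V) | toDist (ω (c k - y)) ≤ r k} := by
    intro k n hkn
    induction n, hkn using Nat.le_induction with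
    | base => exact subset_rfl
    | succ n hn ih => exact (hnest n).trans ih
  have hcc : ∀ k n, k ≤ n → toDist (ω (c k - c n)) ≤ r k :=
    fun k n hkn => (chain k n hkn (hself n)).2
  set s : ℕ → ℝ := fun n => (Finset.range (n + 1)).inf' (Finset.nonempty_range_iff.mpr (Nat.succ_ne_zero n)) r with hs
  have hsle : ∀ k n, k ≤ n → s n ≤ r k := by
    intro k n hkn
    exact Finset.inf'_le _ (Finset.mem_range.mpr (Nat.lt_succ_of_le hkn))
  have hspos : ∀ n, 0 < s n := by
    intro n
    rw [hs, Finset.lt_inf'_iff]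
    exact fun k _ => hr k
  have hsmono : ∀ n, s (n + 1) ≤ s n := by
    intro n
    rw [hs, Finset.le_inf'_iff]
    exact fun k hk => hsle k (n + 1) (Nat.le_of_lt_succ (Nat.lt_succ_of_lt (Finset.mem_range.mp hk)))
  have hstep : ∀ n, toDist (ω (c n - c (n + 1))) ≤ s n := by
    intro n
    rw [hs, Finset.le_inf'_iff]
    intro k hk
    have hk' : k ≤ n := Nat.lt_succ_iff.mp (Finset.mem_range.mp hk)
    have h1 : toDist (ω (c n - c k)) ≤ r k := by
      rw [dist_symm ω hω3neg]; exact hcc k n hk'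
    have h2 : toDist (ω (c k - c (n + 1))) ≤ r k := hcc k (n + 1) (hk'.trans (Nat.le_succ n))
    exact le_trans (dist_tri ω hω3 _ _ (c k)) (max_le h1 h2)
  have hnestV : ∀ n, {y : V | toDist (ω (c (n + 1) - y)) ≤ s (n + 1)} ⊆
      {y : V | toDist (ω (c n - y)) ≤ s n} := by
    intro n y hy
    simp only [Set.mem_setOf_eq] at hy ⊢
    refine le_trans (dist_tri ω hω3 _ _ (c (n + 1))) (max_le (hstep n) (hy.trans (hsmono n)))
  obtain ⟨z, hz⟩ := h c s hspos hnestV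
  rw [Set.mem_iInter] at hz
  obtain ⟨u, hu, w, hw, huw⟩ :=
    Submodule.mem_sup.mp (by rw [hsup]; exact Submodule.mem_top : z ∈ A ⊔ B)
  refine ⟨u, Set.mem_iInter.mpr fun n => ⟨hu, ?_⟩⟩
  have hdec : c n - z = (c n - u) + (-w) := by rw [← huw]; abel
  have hmin : ω (c n - z) = min (ω (c n - u)) (ω (-w)) := by
    rw [hdec]; exact hAB _ (Submodule.sub_mem A (hc n) hu) _ (Submodule.neg_mem B hw)
  have : toDist (ω (c n - u)) ≤ toDist (ω (c n - z)) := by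
    rw [hmin, toDist_min]; exact le_max_left _ _
  exact this.trans ((hz n).trans (hsle n n le_rfl))

lemma backward_aux (hω3neg : ∀ x : V, ω (-x) = ω x)
    (A B : Submodule K V)
    (hAB : ∀ x ∈ A, ∀ y ∈ B, ω (x + y) = min (ω x) (ω y))
    (hsup : A ⊔ B = ⊤)
    (hA : MCprimeOn (fun x y : V => toDist (ω (x - y))) (A : Set V))
    (hB : MCprimeOn (fun x y : V => toDist (ω (x - y))) (B : Set V)) :
    MCprime (fun x y : V => toDist (ω (x - y))) := by
  intro c r hr hnest
  have hdecomp : ∀ n, ∃ u ∈ A, ∃ w ∈ B, u + w = c n := by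
    intro n
    exact Submodule.mem_sup.mp (by rw [hsup]; exact Submodule.mem_top : c n ∈ A ⊔ B)
  choose u hu w hw huw using hdecomp
  have hnestA : ∀ n, {y ∈ (A : Set V) | toDist (ω (u (n + 1) - y)) ≤ r (n + 1)} ⊆
      {y ∈ (A : Set V) | toDist (ω (u n - y)) ≤ r n} := by
    intro n y ⟨hyA, hy⟩
    have h1 : toDist (ω (c (n + 1) - (y + w (n + 1)))) ≤ r (n + 1) := by
      rw [show c (n + 1) - (y + w (n + 1)) = u (n + 1) - y by rw [← huw (n + 1)]; abel]
      exact hy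
    have h2 := hnest n h1
    simp only [Set.mem_setOf_eq] at h2
    have hdec : c n - (y + w (n + 1)) = (u n - y) + (w n - w (n + 1)) := by
      rw [← huw n]; abel
    have hmin : ω (c n - (y + w (n + 1))) = min (ω (u n - y)) (ω (w n - w (n + 1))) := by
      rw [hdec]
      exact hAB _ (Submodule.sub_mem A (hu n) hyA) _ (Submodule.sub_mem B (hw n) (hw (n + 1)))
    refine ⟨hyA, ?_⟩
    have : toDist (ω (u n - y)) ≤ toDist (ω (c n - (y + w (n + 1)))) := by
      rw [hmin, toDist_min]; exact le_max_left _ _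
    exact this.trans h2
  have hnestB : ∀ n, {y ∈ (B : Set V) | toDist (ω (w (n + 1) - y)) ≤ r (n + 1)} ⊆
      {y ∈ (B : Set V) | toDist (ω (w n - y)) ≤ r n} := by
    intro n y ⟨hyB, hy⟩
    have h1 : toDist (ω (c (n + 1) - (u (n + 1) + y))) ≤ r (n + 1) := by
      rw [show c (n + 1) - (u (n + 1) + y) = w (n + 1) - y by rw [← huw (n + 1)]; abel]
      exact hy
    have h2 := hnest n h1
    simp only [Set.mem_setOf_eq] at h2
    have hdec : c n - (u (n + 1) + y) = (u n - u (n + 1)) + (w n - y) := by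
      rw [← huw n]; abel
    have hmin : ω (c n - (u (n + 1) + y)) = min (ω (u n - u (n + 1))) (ω (w n - y)) := by
      rw [hdec]
      exact hAB _ (Submodule.sub_mem A (hu n) (hu (n + 1))) _ (Submodule.sub_mem B (hw n) hyB)
    refine ⟨hyB, ?_⟩
    have : toDist (ω (w n - y)) ≤ toDist (ω (c n - (u (n + 1) + y))) := by
      rw [hmin, toDist_min]; exact le_max_right _ _
    exact this.trans h2
  obtain ⟨x, hx⟩ := hA u r hu hr hnestA
  obtain ⟨y, hy⟩ := hB w r hw hr hnestB
  rw [Set.mem_iInter] at hx hy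
  refine ⟨x + y, Set.mem_iInter.mpr fun n => ?_⟩
  obtain ⟨hxA, hxd⟩ := hx n
  obtain ⟨hyB, hyd⟩ := hy n
  have hdec : c n - (x + y) = (u n - x) + (w n - y) := by rw [← huw n]; abel
  have hmin : ω (c n - (x + y)) = min (ω (u n - x)) (ω (w n - y)) := by
    rw [hdec]
    exact hAB _ (Submodule.sub_mem A (hu n) hxA) _ (Submodule.sub_mem B (hw n) hyB)
  show toDist (ω (c n - (x + y))) ≤ r n
  rw [hmin, toDist_min]
  exact max_le hxd hyd

end Aux

/-- Let `K` be a field with valuation `ν`, `V` a `K`-vector space with a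
valuation-like map `ω` satisfying (1)–(3), and suppose the nonzero subspaces `U` and `W` are
`ω`-complements (i.e. `ω (x + y) = min (ω x) (ω y)` for `x ∈ U`, `y ∈ W`, and `V = U ⊕ W`).
Then `(V, d)` satisfies (MC′) iff both `(U, d|_U)` and `(W, d|_W)` satisfy (MC′). -/
theorem MCprime_iff_of_omega_complements {K V : Type*} [Field K]
    [AddCommGroup V] [Module K V]
    (ν : K → WithTop ℝ)
    (hν1 : ∀ x : K, ν x = ⊤ ↔ x = 0)
    (hνmul : ∀ x y : K, ν (x * y) = ν x + ν y)
    (hνadd : ∀ x y : K, min (ν x) (ν y) ≤ ν (x + y))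
    (m : ℝ) (hm : 0 < m)
    (ω : V → WithTop ℝ)
    (hω1 : ∀ x : V, ω x = ⊤ ↔ x = 0)
    (hω2 : ∀ (x : V) (l : K), ω (l • x) = ω x + (m : WithTop ℝ) * ν l)
    (hω3neg : ∀ x : V, ω (-x) = ω x)
    (hω3 : ∀ x y : V, min (ω x) (ω y) ≤ ω (x + y))
    (U W : Submodule K V) (hU : U ≠ ⊥) (hW : W ≠ ⊥)
    (hcompl : ∀ x ∈ U, ∀ y ∈ W, ω (x + y) = min (ω x) (ω y))
    (hdirect : IsCompl U W) :
    MCprime (fun x y : V => toDist (ω (x - y))) ↔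
      MCprimeOn (fun x y : V => toDist (ω (x - y))) (U : Set V) ∧
        MCprimeOn (fun x y : V => toDist (ω (x - y))) (W : Set V) := by
  constructor
  · intro h
    refine ⟨forward_aux ω ((hω1 0).mpr rfl) hω3neg hω3 U W hcompl hdirect.sup_eq_top h,
      forward_aux ω ((hω1 0).mpr rfl) hω3neg hω3 W U ?_ ?_ h⟩
    · intro y hy x hx
      rw [add_comm, hcompl x hx y hy, min_comm]
    · rw [sup_comm]; exact hdirect.sup_eq_top
  · rintro ⟨h1, h2⟩
    exact backward_aux ω hω3neg U W hcompl hdirect.sup_eq_top h1 h2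
end
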